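/- Let R be an associative unital ring, ν a central invertible element of R, Λ an integer, and let x, y be invertible elements of R satisfying x y = ν^{−Λ} y x. Set Z = x y^{-1}. Then for every integer b, Z^{b+1} x^{−b} = ν^{b(b+1)Λ/2} · Z · y^{−b}. -/

import Mathlib

private lemma zhat_conj {G : Type*} [Group G] (c u v : G) (hc : ∀ g : G, Commute c g)
    (k : ℤ) (h : u * v = c ^ k * v * u) :
    ∀ m : ℤ, u ^ m * v = c ^ (k * m) * v * u ^ m := by
  have hc1 : ∀ (a : ℤ) (g : G), c ^ a * g = g * c ^ a := fun a g => ((hc g).zpow_left a).eq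
  have e1 : u * v * u⁻¹ = c ^ k * v := by rw [h]; group
  have e2 : u⁻¹ * v * u = c ^ (-k) * v := by
    have h4 : c ^ k * (u⁻¹ * v * u) = v := by
      rw [← mul_assoc, ← mul_assoc, hc1, mul_assoc u⁻¹, ← e1]; group
    calc u⁻¹ * v * u = c ^ (-k) * (c ^ k * (u⁻¹ * v * u)) := by
          rw [← mul_assoc, ← zpow_add, neg_add_cancel, zpow_zero, one_mul]
      _ = c ^ (-k) * v := by rw [h4]
  have key : ∀ m : ℤ, u ^ m * v * u ^ (-m) = c ^ (k * m) * v := by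
    intro m
    induction m using Int.induction_on with
    | zero => simp
    | succ n ih =>
        calc u ^ ((n : ℤ) + 1) * v * u ^ (-((n : ℤ) + 1))
            = u * (u ^ (n : ℤ) * v * u ^ (-(n : ℤ))) * u⁻¹ := by group
          _ = u * (c ^ (k * n) * v) * u⁻¹ := by rw [ih]
          _ = c ^ (k * n) * (u * v * u⁻¹) := by
              rw [← mul_assoc, ← hc1]; group
          _ = c ^ (k * n) * (c ^ k * v) := by rw [e1]
          _ = c ^ (k * ((n : ℤ) + 1)) * v := by
              rw [← mul_assoc, ← zpow_add, show k * (n : ℤ) + k = k * ((n : ℤ) + 1) by ring]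
    | pred n ih =>
        calc u ^ (-(n : ℤ) - 1) * v * u ^ (-(-(n : ℤ) - 1))
            = u⁻¹ * (u ^ (-(n : ℤ)) * v * u ^ (-(-(n : ℤ)))) * u := by group
          _ = u⁻¹ * (c ^ (k * -(n : ℤ)) * v) * u := by rw [ih]
          _ = c ^ (k * -(n : ℤ)) * (u⁻¹ * v * u) := by
              rw [← mul_assoc, ← hc1]; group
          _ = c ^ (k * -(n : ℤ)) * (c ^ (-k) * v) := by rw [e2]
          _ = c ^ (k * (-(n : ℤ) - 1)) * v := by
              rw [← mul_assoc, ← zpow_add,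
                show k * -(n : ℤ) + -k = k * (-(n : ℤ) - 1) by ring]
  intro m
  calc u ^ m * v = u ^ m * v * u ^ (-m) * u ^ m := by group
    _ = c ^ (k * m) * v * u ^ m := by rw [key m]

private lemma zhat_T_succ (b : ℤ) : (b + 1) * (b + 1 + 1) / 2 = b * (b + 1) / 2 + (b + 1) := by
  obtain ⟨t, ht⟩ := Int.even_mul_succ_self b
  have h1 : (b + 1) * (b + 1 + 1) = 2 * t + 2 * (b + 1) := by linear_combination ht
  omega

private lemma zhat_T_pred (b : ℤ) : (b - 1) * (b - 1 + 1) / 2 = b * (b + 1) / 2 - b := by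
  obtain ⟨t, ht⟩ := Int.even_mul_succ_self b
  have h1 : (b - 1) * (b - 1 + 1) = 2 * t - 2 * b := by linear_combination ht
  omega

/-- Abstract form of Corollary 4.8: if `x y = ν^(−Λ) y x` with `ν` central invertible,
and `Z = x y⁻¹`, then `Z^(b+1) x^(−b) = ν^(b(b+1)Λ/2) · Z · y^(−b)` for every integer `b`. -/
theorem zhat_pow_identity {R : Type*} [Ring R] (ν x y : Rˣ)
    (hν : ∀ z : R, (ν : R) * z = z * (ν : R)) (Λ : ℤ)
    (hxy : x * y = ν ^ (-Λ) * y * x) (b : ℤ) :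
    (x * y⁻¹) ^ (b + 1) * x ^ (-b) = ν ^ (b * (b + 1) / 2 * Λ) * (x * y⁻¹) * y ^ (-b) := by
  have hc : ∀ g : Rˣ, Commute ν g := fun g => Units.ext (hν g)
  have hc1 : ∀ (a : ℤ) (g : Rˣ), ν ^ a * g = g * ν ^ a := fun a g => ((hc g).zpow_left a).eq
  have pull : ∀ (a : ℤ) (g h : Rˣ), g * (ν ^ a * h) = ν ^ a * (g * h) := fun a g h => by
    rw [← mul_assoc, ← hc1, mul_assoc]
  -- basic commutation relations
  have rel1 : y⁻¹ * x = ν ^ (-Λ) * x * y⁻¹ := by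
    calc y⁻¹ * x = y⁻¹ * (x * y) * y⁻¹ := by group
      _ = y⁻¹ * (ν ^ (-Λ) * y * x) * y⁻¹ := by rw [hxy]
      _ = ν ^ (-Λ) * x * y⁻¹ := by
          rw [mul_assoc (ν ^ (-Λ)) y x, pull]; group
  have rel2 : y⁻¹ * (x * y⁻¹) = ν ^ (-Λ) * (x * y⁻¹) * y⁻¹ := by
    rw [← mul_assoc, rel1]; group
  -- powered commutation relations
  have B : ∀ m : ℤ, y⁻¹ ^ m * x = ν ^ (-Λ * m) * x * y⁻¹ ^ m :=
    zhat_conj ν y⁻¹ x hc (-Λ) rel1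
  have A : ∀ m : ℤ, y⁻¹ ^ m * (x * y⁻¹) = ν ^ (-Λ * m) * (x * y⁻¹) * y⁻¹ ^ m :=
    zhat_conj ν y⁻¹ (x * y⁻¹) hc (-Λ) rel2
  -- rearranged form: Z * y^(-m) = ν^(m*Λ) * y^(-m) * Z
  have A' : ∀ m : ℤ, (x * y⁻¹) * y ^ (-m) = ν ^ (m * Λ) * y ^ (-m) * (x * y⁻¹) := by
    intro m
    have := A m
    have hy : y ^ (-m) = y⁻¹ ^ m := by rw [inv_zpow, ← zpow_neg]
    have h5 : ν ^ (m * Λ) * (y⁻¹ ^ m * (x * y⁻¹)) = (x * y⁻¹) * y⁻¹ ^ m := by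
      rw [this, ← mul_assoc, ← mul_assoc, ← zpow_add, show m * Λ + -Λ * m = 0 by ring,
        zpow_zero, one_mul]
    rw [hy, ← h5, mul_assoc]
  have B' : ∀ m : ℤ, y ^ (-m) * x = ν ^ (-m * Λ) * x * y ^ (-m) := by
    intro m
    have hy : y ^ (-m) = y⁻¹ ^ m := by rw [inv_zpow, ← zpow_neg]
    rw [hy, B m, show -Λ * m = -m * Λ by ring]
  -- main induction
  induction b using Int.induction_on with
  | zero => simp
  | succ n ih =>
      calc (x * y⁻¹) ^ ((n : ℤ) + 1 + 1) * x ^ (-((n : ℤ) + 1))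
          = (x * y⁻¹) * ((x * y⁻¹) ^ ((n : ℤ) + 1) * x ^ (-(n : ℤ))) * (y⁻¹ * (x * y⁻¹)⁻¹) := by
            group
        _ = (x * y⁻¹) * (ν ^ ((n : ℤ) * ((n : ℤ) + 1) / 2 * Λ) * (x * y⁻¹) * y ^ (-(n : ℤ))) *
              (y⁻¹ * (x * y⁻¹)⁻¹) := by rw [ih]
        _ = ν ^ ((n : ℤ) * ((n : ℤ) + 1) / 2 * Λ) *
              ((x * y⁻¹) * ((x * y⁻¹) * y ^ (-((n : ℤ) + 1))) * (x * y⁻¹)⁻¹) := by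
            rw [mul_assoc (ν ^ ((n : ℤ) * ((n : ℤ) + 1) / 2 * Λ)), pull]
            group
        _ = ν ^ ((n : ℤ) * ((n : ℤ) + 1) / 2 * Λ) *
              ((x * y⁻¹) * (ν ^ (((n : ℤ) + 1) * Λ) * y ^ (-((n : ℤ) + 1)) * (x * y⁻¹)) *
                (x * y⁻¹)⁻¹) := by rw [A' ((n : ℤ) + 1)]
        _ = ν ^ (((n : ℤ) + 1) * ((n : ℤ) + 1 + 1) / 2 * Λ) * (x * y⁻¹) * y ^ (-((n : ℤ) + 1)) := by
            rw [mul_assoc (ν ^ (((n : ℤ) + 1) * Λ)), pull,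
              mul_assoc (ν ^ (((n : ℤ) + 1) * Λ)), pull, ← mul_assoc, ← zpow_add,
              show ((n : ℤ) + 1) * Λ + (n : ℤ) * ((n : ℤ) + 1) / 2 * Λ
                = ((n : ℤ) + 1) * ((n : ℤ) + 1 + 1) / 2 * Λ by
                  rw [zhat_T_succ]; ring]
            group
  | pred n ih =>
      have hZp : (x * y⁻¹) ^ (-(n : ℤ) - 1 + 1) = (x * y⁻¹)⁻¹ * (x * y⁻¹) ^ (-(n : ℤ) + 1) := by
        have h := zpow_add (x * y⁻¹) (-1 : ℤ) (-(n : ℤ) + 1)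
        rw [zpow_neg_one] at h
        rw [← h]
        congr 1
        ring
      have hxp : x ^ (-(-(n : ℤ) - 1)) = x ^ (-(-(n : ℤ))) * x := by
        rw [← zpow_add_one]
        congr 1
        ring
      calc (x * y⁻¹) ^ (-(n : ℤ) - 1 + 1) * x ^ (-(-(n : ℤ) - 1))
          = (x * y⁻¹)⁻¹ * ((x * y⁻¹) ^ (-(n : ℤ) + 1) * x ^ (-(-(n : ℤ)))) * x := by
            rw [hZp, hxp]
            simp only [mul_assoc]
        _ = (x * y⁻¹)⁻¹ * (ν ^ (-(n : ℤ) * (-(n : ℤ) + 1) / 2 * Λ) * (x * y⁻¹) * y ^ (-(-(n : ℤ)))) *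
              x := by rw [ih]
        _ = ν ^ (-(n : ℤ) * (-(n : ℤ) + 1) / 2 * Λ) * (y ^ (-(-(n : ℤ))) * x) := by
            rw [mul_assoc (ν ^ (-(n : ℤ) * (-(n : ℤ) + 1) / 2 * Λ)), pull]
            group
        _ = ν ^ (-(n : ℤ) * (-(n : ℤ) + 1) / 2 * Λ) *
              (ν ^ (-(-(n : ℤ)) * Λ) * x * y ^ (-(-(n : ℤ)))) := by rw [B' (-(n : ℤ))]
        _ = ν ^ ((-(n : ℤ) - 1) * (-(n : ℤ) - 1 + 1) / 2 * Λ) * (x * y⁻¹) * y ^ (-(-(n : ℤ) - 1)) := by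
            rw [mul_assoc (ν ^ (-(-(n : ℤ)) * Λ)), pull, ← mul_assoc, ← zpow_add,
              show -(-(n : ℤ)) * Λ + -(n : ℤ) * (-(n : ℤ) + 1) / 2 * Λ
                = (-(n : ℤ) - 1) * (-(n : ℤ) - 1 + 1) / 2 * Λ by
                  rw [zhat_T_pred]; ring]
            group
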